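/- Let X be a principal 𝕋-bundle and t₀ ∈ X a point with trivial isotropy (λt₀ = t₀ only for λ = 1). Then for each μ ∈ 𝕋, the set F_{t₀,μ} := {a ∈ C₀^𝕋(X) : ‖a‖ ≤ 1 and a(t₀) = μ} is a non-empty, norm-closed, proper face of the closed unit ball of C₀^𝕋(X). -/

import Mathlib

open scoped ZeroAtInfty


open MeasureTheory Filter Set Complex

noncomputable section

theorem circle_exists_elem {X : Type*} [TopologicalSpace X] [LocallyCompactSpace X] [T2Space X]
    [MulAction Circle X] [ContinuousSMul Circle X]
    (hfree : ∀ (l : Circle) (t : X), l • t = t → l = 1)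
    (t₀ : X) (μ : ℂ) (hμ : ‖μ‖ = 1) :
    ∃ a : C₀(X, ℂ), (∀ (l : Circle) (t : X), a (l • t) = (l : ℂ) * a t) ∧ ‖a‖ ≤ 1 ∧ a t₀ = μ := by
  borelize Circle
  set ν : Measure Circle := Measure.haar with hν
  haveI : ν.IsMulRightInvariant := by
    constructor
    intro g
    have he : (· * g) = (g * ·) := funext fun x => mul_comm x g
    rw [he]
    exact map_mul_left_eq_self ν g
  have hcont_coe : Continuous fun l : Circle => (l : ℂ) := continuous_subtype_val
  set C : Set Circle := {l : Circle | (l : ℂ).re ≤ 1/2} with hC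
  have hCclosed : IsClosed C := isClosed_le (Complex.continuous_re.comp hcont_coe) continuous_const
  have hCcomp : IsCompact C := hCclosed.isCompact
  set Ci : Set X := (fun l : Circle => l • t₀) '' C with hCi
  have hCicomp : IsCompact Ci := hCcomp.image (continuous_id.smul continuous_const)
  have ht₀ : t₀ ∉ Ci := by
    rintro ⟨l, hl, hlt⟩
    have : l = 1 := hfree l t₀ hlt
    rw [this] at hl
    norm_num [hC] at hl
  obtain ⟨φ, hφ1, hφ0, hφc, hφmem⟩ :=
    exists_continuous_one_zero_of_isCompact (isCompact_singleton (x := t₀))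
      hCicomp.isClosed (disjoint_singleton_left.mpr ht₀)
  have hφt₀ : φ t₀ = 1 := hφ1 rfl
  have hφsupp : Function.support φ ⊆ Ciᶜ := fun x hx hmem => hx (hφ0 hmem)
  -- the averaged function
  set G : X → Circle → ℂ := fun t l => (starRingEnd ℂ) l * (φ (l • t) : ℂ) with hG
  set F : X → ℂ := fun t => ∫ l : Circle, G t l ∂ν with hF
  have hint : ∀ t : X, Continuous (G t) := by
    intro t
    exact (Complex.continuous_conj.comp hcont_coe).mul
      (Complex.continuous_ofReal.comp (φ.continuous.comp (continuous_id.smul continuous_const)))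
  have hintg : ∀ t : X, Integrable (G t) ν := by
    intro t
    exact (hint t).integrable_of_hasCompactSupport
      (IsCompact.of_isClosed_subset isCompact_univ (isClosed_tsupport _) (subset_univ _))
  have habs : ∀ (l : Circle), ‖(l : ℂ)‖ = 1 := fun l => Circle.norm_coe l
  -- continuity of F
  have hFcont : Continuous F := by
    rw [continuous_iff_continuousAt]
    intro t₁
    rw [ContinuousAt, Metric.tendsto_nhds]
    intro ε hε
    set M := (ν univ).toReal + 1 with hM
    have hM0 : 0 < M := by positivity
    have hε' : 0 < ε / M := by positivity
    have hopen : IsOpen {p : Circle × X | |φ (p.1 • p.2) - φ (p.1 • t₁)| < ε / M} := by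
      apply isOpen_lt (by fun_prop) continuous_const
    have hsub : (univ : Set Circle) ×ˢ ({t₁} : Set X) ⊆
        {p : Circle × X | |φ (p.1 • p.2) - φ (p.1 • t₁)| < ε / M} := by
      rintro ⟨l, t⟩ ⟨-, ht⟩
      simp only [mem_singleton_iff] at ht
      simp [ht, hε']
    obtain ⟨U, V, hU, hV, hUu, hVt, hUV⟩ :=
      generalized_tube_lemma isCompact_univ isCompact_singleton hopen hsub
    filter_upwards [hV.mem_nhds (hVt rfl)] with t htV
    have key : ∀ l : Circle, ‖G t l - G t₁ l‖ ≤ ε / M := by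
      intro l
      have hmem : (l, t) ∈ {p : Circle × X | |φ (p.1 • p.2) - φ (p.1 • t₁)| < ε / M} :=
        hUV ⟨hUu (mem_univ l), htV⟩
      have h2 : ‖G t l - G t₁ l‖ = |φ (l • t) - φ (l • t₁)| := by
        rw [hG]
        simp only
        rw [← mul_sub, norm_mul]
        rw [show ‖(starRingEnd ℂ) (l : ℂ)‖ = 1 by simp [habs l], one_mul,
          ← Complex.ofReal_sub, Complex.norm_real, Real.norm_eq_abs]
      rw [h2]
      exact le_of_lt hmem
    have hdiff : F t - F t₁ = ∫ l, (G t l - G t₁ l) ∂ν := (integral_sub (hintg t) (hintg t₁)).symm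
    rw [dist_eq_norm, hdiff]
    calc ‖∫ l, (G t l - G t₁ l) ∂ν‖ ≤ (ε / M) * (ν univ).toReal :=
          norm_integral_le_of_norm_le_const (Eventually.of_forall key)
      _ < ε := by
          rw [div_mul_eq_mul_div, mul_comm, ← div_mul_eq_mul_div]
          calc (ν univ).toReal / M * ε < 1 * ε := by
                apply mul_lt_mul_of_pos_right _ hε
                rw [div_lt_one hM0]; simp [hM]
            _ = ε := one_mul ε
  -- equivariance of F
  have hFeq : ∀ (m : Circle) (t : X), F (m • t) = (m : ℂ) * F t := by
    intro m t
    have hconj : (starRingEnd ℂ) ((m : ℂ)⁻¹) = (m : ℂ) := by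
      rw [map_inv₀, ← Circle.coe_inv_eq_conj, ← Circle.coe_inv, inv_inv]
    calc F (m • t)
        = ∫ l, (fun l' : Circle =>
            (starRingEnd ℂ) ((l' * m⁻¹ : Circle) : ℂ) * (φ (l' • t) : ℂ)) (l * m) ∂ν := by
          refine integral_congr_ae (Eventually.of_forall fun l => ?_)
          simp only [hG, mul_inv_cancel_right, mul_smul]
      _ = ∫ l : Circle, (starRingEnd ℂ) ((l * m⁻¹ : Circle) : ℂ) * (φ (l • t) : ℂ) ∂ν :=
          integral_mul_right_eq_self (μ := ν)
            (fun l' : Circle => (starRingEnd ℂ) ((l' * m⁻¹ : Circle) : ℂ) * (φ (l' • t) : ℂ)) m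
      _ = (m : ℂ) * F t := by
          rw [hF]
          simp only
          rw [← integral_const_mul]
          refine integral_congr_ae (Eventually.of_forall fun l => ?_)
          rw [hG]
          push_cast
          rw [map_mul, hconj]
          ring
  -- F t₀ has positive real part
  set g : Circle → ℝ := fun l => (l : ℂ).re * φ (l • t₀) with hg
  have hgcont : Continuous g :=
    (Complex.continuous_re.comp hcont_coe).mul
      (φ.continuous.comp (continuous_id.smul continuous_const))
  have hgint : Integrable g ν :=
    hgcont.integrable_of_hasCompactSupport
      (IsCompact.of_isClosed_subset isCompact_univ (isClosed_tsupport _) (subset_univ _))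
  have hgnn : 0 ≤ g := by
    intro l
    by_cases h : φ (l • t₀) = 0
    · simp [hg, h]
    · have hmem' : l • t₀ ∈ Function.support φ := h
      have hlC : l ∉ C := fun hc => (hφsupp hmem') ⟨l, hc, rfl⟩
      have hre : 1/2 < (l : ℂ).re := lt_of_not_ge hlC
      exact mul_nonneg (by linarith) (hφmem _).1
  have hg1 : g 1 = 1 := by
    simp [hg, hφt₀]
  have hgpos : 0 < ∫ l, g l ∂ν := by
    rw [integral_pos_iff_support_of_nonneg hgnn hgint]
    have hopen : IsOpen (Function.support g) := by
      have : Function.support g = g ⁻¹' ({0}ᶜ) := by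
        ext l; simp [Function.mem_support]
      rw [this]
      exact (isOpen_compl_singleton).preimage hgcont
    refine hopen.measure_pos ν ⟨1, ?_⟩
    simp [Function.mem_support, hg1]
  have hFt₀re : (F t₀).re = ∫ l, g l ∂ν := by
    have h1 := integral_re (hintg t₀)
    rw [hF]
    simp only
    rw [show (∫ l : Circle, G t₀ l ∂ν).re = RCLike.re (∫ l : Circle, G t₀ l ∂ν) from rfl, ← h1]
    refine integral_congr_ae (Eventually.of_forall fun l => ?_)
    rw [hG, hg]
    simp [RCLike.re_to_complex, Complex.mul_re]
  have hF0 : F t₀ ≠ 0 := by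
    intro h
    rw [h] at hFt₀re
    simp only [Complex.zero_re] at hFt₀re
    exact hgpos.ne' hFt₀re.symm
  -- build the function a
  set b : X → ℂ := fun t => (μ / F t₀) * F t with hb
  have hbcont : Continuous b := continuous_const.mul hFcont
  have hbeq : ∀ (l : Circle) (t : X), b (l • t) = (l : ℂ) * b t := by
    intro l t
    rw [hb]
    simp only
    rw [hFeq]
    ring
  have hμ0 : μ ≠ 0 := by
    intro h; rw [h] at hμ; simp at hμ
  have hbt₀ : b t₀ = μ := by
    rw [hb]; field_simp
  set d : X → ℝ := fun t => max 1 ‖b t‖ with hd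
  have hd1 : ∀ t, 1 ≤ d t := fun t => le_max_left _ _
  have hdpos : ∀ t, 0 < d t := fun t => lt_of_lt_of_le one_pos (hd1 t)
  have hdcont : Continuous d := continuous_const.max (continuous_norm.comp hbcont)
  have hdne : ∀ t, ((d t : ℂ)) ≠ 0 := fun t => by
    exact_mod_cast Complex.ofReal_ne_zero.mpr (ne_of_gt (hdpos t))
  set aF : X → ℂ := fun t => b t / (d t : ℂ) with haF
  have hacont : Continuous aF :=
    hbcont.div (Complex.continuous_ofReal.comp hdcont) hdne
  have haeq : ∀ (l : Circle) (t : X), aF (l • t) = (l : ℂ) * aF t := by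
    intro l t
    have hdeq : d (l • t) = d t := by
      rw [hd]
      simp only
      rw [hbeq, norm_mul, habs l, one_mul]
    rw [haF]
    simp only
    rw [hbeq, hdeq, mul_div_assoc]
  have habst₀ : ‖b t₀‖ = 1 := by
    rw [hbt₀, hμ]
  have hat₀ : aF t₀ = μ := by
    rw [haF]
    simp only
    rw [hd]
    simp only [hbt₀, hμ, max_self, Complex.ofReal_one, div_one]
  -- compact support
  set T : Set X := (fun p : Circle × X => p.1 • p.2) '' ((univ : Set Circle) ×ˢ tsupport φ)
    with hT
  have hTcomp : IsCompact T := (isCompact_univ.prod hφc).image continuous_smul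
  have hFzero : ∀ t ∉ T, F t = 0 := by
    intro t ht
    have hφz : ∀ l : Circle, φ (l • t) = 0 := by
      intro l
      by_contra h
      exact ht ⟨(l⁻¹, l • t), ⟨mem_univ _, subset_tsupport _ h⟩, by simp [inv_smul_smul]⟩
    rw [hF]
    simp only
    have : ∀ l : Circle, G t l = 0 := by
      intro l; rw [hG]; simp [hφz l]
    simp_rw [this]
    exact integral_zero _ _
  have hazero : ∀ t ∉ T, aF t = 0 := by
    intro t ht
    rw [haF, hb]
    simp [hFzero t ht]
  have hzai : Tendsto aF (cocompact X) (nhds 0) := by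
    have hev : aF =ᶠ[cocompact X] (fun _ => 0) :=
      mem_of_superset hTcomp.compl_mem_cocompact (fun t ht => hazero t ht)
    rw [tendsto_congr' hev]
    exact tendsto_const_nhds
  refine ⟨⟨⟨aF, hacont⟩, hzai⟩, haeq, ?_, hat₀⟩
  rw [← ZeroAtInftyContinuousMap.norm_toBCF_eq_norm]
  refine (BoundedContinuousFunction.norm_le zero_le_one).mpr fun x => ?_
  show ‖aF x‖ ≤ 1
  rw [haF]
  simp only
  rw [norm_div, Complex.norm_real, Real.norm_of_nonneg (hdpos x).le]
  rw [div_le_one (hdpos x)]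
  exact le_max_right _ _

end


theorem stmt14 {X : Type*} [TopologicalSpace X] [LocallyCompactSpace X] [T2Space X]
    [MulAction Circle X] [ContinuousSMul Circle X]
    (hfree : ∀ (l : Circle) (t : X), l • t = t → l = 1)
    (t₀ : X) (μ : ℂ) (hμ : ‖μ‖ = 1) :
    ({a : C₀(X, ℂ) | (∀ (l : Circle) (t : X), a (l • t) = (l : ℂ) * a t) ∧
        ‖a‖ ≤ 1 ∧ a t₀ = μ}).Nonempty ∧
    IsClosed {a : C₀(X, ℂ) | (∀ (l : Circle) (t : X), a (l • t) = (l : ℂ) * a t) ∧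
        ‖a‖ ≤ 1 ∧ a t₀ = μ} ∧
    {a : C₀(X, ℂ) | (∀ (l : Circle) (t : X), a (l • t) = (l : ℂ) * a t) ∧ ‖a‖ ≤ 1 ∧ a t₀ = μ}
      ⊆ {a : C₀(X, ℂ) | (∀ (l : Circle) (t : X), a (l • t) = (l : ℂ) * a t) ∧ ‖a‖ ≤ 1} ∧
    {a : C₀(X, ℂ) | (∀ (l : Circle) (t : X), a (l • t) = (l : ℂ) * a t) ∧ ‖a‖ ≤ 1 ∧ a t₀ = μ}
      ≠ {a : C₀(X, ℂ) | (∀ (l : Circle) (t : X), a (l • t) = (l : ℂ) * a t) ∧ ‖a‖ ≤ 1} ∧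
    Convex ℝ {a : C₀(X, ℂ) | (∀ (l : Circle) (t : X), a (l • t) = (l : ℂ) * a t) ∧
        ‖a‖ ≤ 1 ∧ a t₀ = μ} ∧
    ∀ b c : C₀(X, ℂ),
      (∀ (l : Circle) (t : X), b (l • t) = (l : ℂ) * b t) → ‖b‖ ≤ 1 →
      (∀ (l : Circle) (t : X), c (l • t) = (l : ℂ) * c t) → ‖c‖ ≤ 1 →
      ∀ s : ℝ, 0 < s → s < 1 →
        (s • b + (1 - s) • c) ∈ {a : C₀(X, ℂ) |
          (∀ (l : Circle) (t : X), a (l • t) = (l : ℂ) * a t) ∧ ‖a‖ ≤ 1 ∧ a t₀ = μ} →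
        b ∈ {a : C₀(X, ℂ) | (∀ (l : Circle) (t : X), a (l • t) = (l : ℂ) * a t) ∧
          ‖a‖ ≤ 1 ∧ a t₀ = μ} ∧
        c ∈ {a : C₀(X, ℂ) | (∀ (l : Circle) (t : X), a (l • t) = (l : ℂ) * a t) ∧
          ‖a‖ ≤ 1 ∧ a t₀ = μ} := by
  have hnorm_pt : ∀ (f : C₀(X, ℂ)) (x : X), ‖f x‖ ≤ ‖f‖ := fun f x => by
    rw [← ZeroAtInftyContinuousMap.norm_toBCF_eq_norm]
    exact f.toBCF.norm_coe_le_norm x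
  have heval : ∀ x : X, Continuous fun a : C₀(X, ℂ) => a x := by
    intro x
    have hl : LipschitzWith 1 fun a : C₀(X, ℂ) => a x := by
      refine LipschitzWith.of_dist_le_mul fun a b => ?_
      rw [NNReal.coe_one, one_mul]
      exact (BoundedContinuousFunction.dist_coe_le_dist x :
        dist (a.toBCF x) (b.toBCF x) ≤ dist a.toBCF b.toBCF)
    exact hl.continuous
  refine ⟨circle_exists_elem hfree t₀ μ hμ, ?_, ?_, ?_, ?_, ?_⟩
  · -- closed
    have hP : IsClosed {a : C₀(X, ℂ) | ∀ (l : Circle) (t : X), a (l • t) = (l : ℂ) * a t} := by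
      have he : {a : C₀(X, ℂ) | ∀ (l : Circle) (t : X), a (l • t) = (l : ℂ) * a t}
          = ⋂ (l : Circle) (t : X), {a : C₀(X, ℂ) | a (l • t) = (l : ℂ) * a t} := by
        ext a; simp [Set.mem_iInter]
      rw [he]
      exact isClosed_iInter fun l => isClosed_iInter fun t =>
        isClosed_eq (heval _) (continuous_const.mul (heval _))
    have hN : IsClosed {a : C₀(X, ℂ) | ‖a‖ ≤ 1} := isClosed_le continuous_norm continuous_const
    have hV : IsClosed {a : C₀(X, ℂ) | a t₀ = μ} := isClosed_eq (heval t₀) continuous_const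
    exact hP.inter (hN.inter hV)
  · rintro a ⟨h1, h2, _⟩
    exact ⟨h1, h2⟩
  · -- proper
    intro h
    have h0 : (0 : C₀(X, ℂ)) ∈ {a : C₀(X, ℂ) |
        (∀ (l : Circle) (t : X), a (l • t) = (l : ℂ) * a t) ∧ ‖a‖ ≤ 1} := by
      constructor
      · intro l t; simp
      · simp
    rw [← h] at h0
    have h3 := h0.2.2
    simp only [ZeroAtInftyContinuousMap.coe_zero, Pi.zero_apply] at h3
    rw [← h3] at hμ
    simp at hμ
  · -- convex
    rintro a ⟨ha1, ha2, ha3⟩ b ⟨hb1, hb2, hb3⟩ s t hs ht hst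
    refine ⟨?_, ?_, ?_⟩
    · intro l x
      simp only [ZeroAtInftyContinuousMap.coe_add, ZeroAtInftyContinuousMap.coe_smul,
        Pi.add_apply, Pi.smul_apply]
      rw [ha1 l x, hb1 l x, mul_add, mul_smul_comm, mul_smul_comm]
    · calc ‖s • a + t • b‖ ≤ ‖s • a‖ + ‖t • b‖ := norm_add_le _ _
        _ = s * ‖a‖ + t * ‖b‖ := by
            rw [norm_smul s a, norm_smul t b, Real.norm_of_nonneg hs, Real.norm_of_nonneg ht]
        _ ≤ s * 1 + t * 1 := by
            exact add_le_add (mul_le_mul_of_nonneg_left ha2 hs) (mul_le_mul_of_nonneg_left hb2 ht)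
        _ = 1 := by rw [mul_one, mul_one, hst]
    · simp only [ZeroAtInftyContinuousMap.coe_add, ZeroAtInftyContinuousMap.coe_smul,
        Pi.add_apply, Pi.smul_apply]
      rw [ha3, hb3, ← add_smul, hst, one_smul]
  · -- face
    intro b c hb1 hb2 hc1 hc2 s hs hs1 hmem
    obtain ⟨-, -, hval⟩ := hmem
    have hval' : s • b t₀ + (1 - s) • c t₀ = μ := by
      simpa only [ZeroAtInftyContinuousMap.coe_add, ZeroAtInftyContinuousMap.coe_smul,
        Pi.add_apply, Pi.smul_apply] using hval
    have hbn : ‖b t₀‖ ≤ 1 := le_trans (hnorm_pt b t₀) hb2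
    have hcn : ‖c t₀‖ ≤ 1 := le_trans (hnorm_pt c t₀) hc2
    have heq : b t₀ = c t₀ := by
      by_contra hne
      have := norm_combo_lt_of_ne (a := s) (b := 1 - s) hbn hcn hne hs (by linarith) (by ring)
      rw [hval', hμ] at this
      exact lt_irrefl 1 this
    have hbt : b t₀ = μ := by
      rw [heq] at hval'
      rw [← add_smul] at hval'
      simp only [add_sub_cancel, one_smul] at hval'
      rw [heq, hval']
    exact ⟨⟨hb1, hb2, hbt⟩, hc1, hc2, heq ▸ hbt⟩
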